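/- Let ρ : ℝ → ℝ be a nonnegative integrable function with ∫_ℝ ρ(t) dt = 1 and κ := ∫_ℝ |t| ρ(t) dt < ∞, and for ε > 0 let p̂(t, ε) := ∫_ℝ max(t − εs, 0) ρ(s) ds. Let m ≥ 1 and let g₁, …, g_m : ℝ → ℝ be continuously differentiable, and define the nested smoothing S by S_m(x, ε) := g_m(x), S_j(x, ε) := g_j(x) + p̂(S_{j+1}(x, ε) − g_j(x), ε) for j = m−1, …, 1, and S(x, ε) := S₁(x, ε). Then for every fixed ε > 0 the function x ↦ S(x, ε) is differentiable, and for every x ∈ ℝ there exist Λ₁, …, Λ_m ∈ [0, 1] with Λ₁ + ⋯ + Λ_m = 1 such that the derivative S_x(x, ε) = Σ_{i=1}^m Λ_i g_i'(x). -/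

import Mathlib

open MeasureTheory Filter Topology

lemma core_bound (u h : ℝ) :
    |max (u + h) 0 - max u 0 - (if 0 ≤ u then h else 0)| ≤
      (if |u| ≤ |h| then 2 * |h| else 0) := by
  have hlip : |max (u + h) 0 - max u 0| ≤ |h| := by
    have := abs_max_sub_max_le_abs (u + h) u 0
    simpa using this
  split_ifs with h1 h2 h2
  · calc |max (u + h) 0 - max u 0 - h|
        ≤ |max (u + h) 0 - max u 0| + |h| := abs_sub _ _
      _ ≤ |h| + |h| := by gcongr
      _ = 2 * |h| := by ring
  · -- 0 ≤ u, |h| < |u| : u > |h|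
    push_neg at h2
    have hu : |h| < u := by rwa [abs_of_nonneg h1] at h2
    have h1' : (0:ℝ) ≤ u + h := by have := neg_abs_le h; linarith
    rw [max_eq_left h1', max_eq_left h1]
    simp
  · calc |max (u + h) 0 - max u 0 - 0|
        ≤ |max (u + h) 0 - max u 0| + |0| := abs_sub _ _
      _ ≤ |h| + |h| := by simpa using hlip.trans (le_add_of_nonneg_right (abs_nonneg h))
      _ = 2 * |h| := by ring
  · push_neg at h1 h2
    have hu : u < -|h| := by
      rw [abs_of_neg h1] at h2; linarith
    have h1' : u + h ≤ 0 := by have := le_abs_self h; linarith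
    rw [max_eq_right h1', max_eq_right h1.le]
    simp


lemma phat_integrand_integrable (ρ : ℝ → ℝ) (ε : ℝ) (hρ_int : Integrable ρ)
    (hρ_nonneg : ∀ t, 0 ≤ ρ t)
    (hκ_int : Integrable (fun t => |t| * ρ t)) (hε : 0 < ε) (a : ℝ) :
    Integrable (fun s => max (a - ε * s) 0 * ρ s) := by
  apply Integrable.mono' ((hρ_int.const_mul |a|).add (hκ_int.const_mul ε))
  · exact (Continuous.aestronglyMeasurable (by continuity)).mul hρ_int.aestronglyMeasurable
  · refine Filter.Eventually.of_forall fun s => ?_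
    have h1 : max (a - ε * s) 0 ≤ |a| + ε * |s| := by
      rw [max_le_iff]
      constructor
      · have := abs_sub_abs_le_abs_sub a (ε * s)
        have h2 : |ε * s| = ε * |s| := by rw [abs_mul, abs_of_pos hε]
        have := le_abs_self (a - ε * s)
        have := abs_sub a (ε * s)
        nlinarith [le_abs_self a, abs_nonneg s]
      · positivity
    have h0 : (0:ℝ) ≤ max (a - ε * s) 0 := le_max_right _ _
    calc ‖max (a - ε * s) 0 * ρ s‖ = max (a - ε * s) 0 * ρ s := by
          rw [Real.norm_eq_abs, abs_of_nonneg (mul_nonneg h0 (hρ_nonneg s))]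
      _ ≤ (|a| + ε * |s|) * ρ s := by gcongr; exact hρ_nonneg s
      _ = |a| * ρ s + ε * (|s| * ρ s) := by ring

lemma phat_hasDerivAt (ρ : ℝ → ℝ) (ε : ℝ) (hρ_int : Integrable ρ)
    (hρ_nonneg : ∀ t, 0 ≤ ρ t)
    (hκ_int : Integrable (fun t => |t| * ρ t)) (hε : 0 < ε) (a : ℝ) :
    HasDerivAt (fun a => ∫ s, max (a - ε * s) 0 * ρ s)
      (∫ s, ({s : ℝ | ε * s ≤ a}).indicator ρ s) a := by
  set A : Set ℝ := {s : ℝ | ε * s ≤ a} with hA_def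
  have hA : MeasurableSet A := measurableSet_le (measurable_id.const_mul ε) measurable_const
  set F : ℝ := ∫ s, A.indicator ρ s with hF_def
  have hFint : Integrable (A.indicator ρ) := hρ_int.indicator hA
  set C : ℝ → Set ℝ := fun h => {s : ℝ | |a - ε * s| ≤ |h|} with hC_def
  have hC : ∀ h, MeasurableSet (C h) := fun h =>
    measurableSet_le ((measurable_const.sub (measurable_id.const_mul ε)).abs) measurable_const
  set K : ℝ → ℝ := fun h => ∫ s, (C h).indicator ρ s with hK_def
  have hKint : ∀ h, Integrable ((C h).indicator ρ) := fun h => hρ_int.indicator (hC h)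
  have hKnonneg : ∀ h, 0 ≤ K h := fun h =>
    integral_nonneg fun s => Set.indicator_nonneg (fun t _ => hρ_nonneg t) s
  -- K tends to 0
  have hK0 : Tendsto K (𝓝 0) (𝓝 0) := by
    have main := tendsto_integral_filter_of_dominated_convergence (μ := volume)
      (l := 𝓝 (0:ℝ)) (F := fun h => (C h).indicator ρ) (f := fun _ => (0:ℝ)) ρ
      ?_ ?_ ?_ ?_
    · simpa using main
    · exact Eventually.of_forall fun h =>
        hρ_int.aestronglyMeasurable.indicator (hC h)
    · refine Eventually.of_forall fun h => Eventually.of_forall fun s => ?_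
      show ‖(C h).indicator ρ s‖ ≤ ρ s
      by_cases hs : s ∈ C h
      · rw [Set.indicator_of_mem hs, Real.norm_eq_abs, abs_of_nonneg (hρ_nonneg s)]
      · rw [Set.indicator_of_notMem hs]; simpa using hρ_nonneg s
    · exact hρ_int
    · have hnull : (volume : Measure ℝ) {s : ℝ | ε * s = a} = 0 := by
        refine measure_mono_null (fun s hs => ?_) (measure_singleton (a / ε))
        have hs' : ε * s = a := hs
        have : s = a / ε := by field_simp; linarith [hs']
        simp [this]
      have hae : ∀ᵐ s : ℝ, ε * s ≠ a := by
        rw [ae_iff]; push_neg; simpa using hnull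
      filter_upwards [hae] with s hs
      have hr : 0 < |a - ε * s| := abs_pos.2 (sub_ne_zero.2 fun hh => hs hh.symm)
      have hev : ∀ᶠ h : ℝ in 𝓝 0, (C h).indicator ρ s = 0 := by
        have h1 : ∀ᶠ h : ℝ in 𝓝 0, |h| < |a - ε * s| := by
          simpa using eventually_abs_sub_lt (0:ℝ) hr
        filter_upwards [h1] with h hh
        apply Set.indicator_of_notMem
        simp only [hC_def, Set.mem_setOf_eq, not_le]
        exact hh
      exact Tendsto.congr' (EventuallyEq.symm hev) tendsto_const_nhds
  -- key bound
  have hint : ∀ b : ℝ, Integrable (fun s => max (b - ε * s) 0 * ρ s) :=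
    phat_integrand_integrable ρ ε hρ_int hρ_nonneg hκ_int hε
  have keybound : ∀ b : ℝ,
      |(∫ s, max (b - ε * s) 0 * ρ s) - (∫ s, max (a - ε * s) 0 * ρ s) - (b - a) * F| ≤
        2 * |b - a| * K (b - a) := by
    intro b
    have hint3 : Integrable (fun s => (b - a) * A.indicator ρ s) := hFint.const_mul _
    have heq : (∫ s, max (b - ε * s) 0 * ρ s) - (∫ s, max (a - ε * s) 0 * ρ s)
        - (b - a) * F
        = ∫ s, (max (b - ε * s) 0 * ρ s - max (a - ε * s) 0 * ρ s
            - (b - a) * A.indicator ρ s) := by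
      rw [hF_def, ← integral_const_mul, ← integral_sub (hint b) (hint a),
        ← integral_sub (f := fun s => max (b - ε * s) 0 * ρ s - max (a - ε * s) 0 * ρ s)
          (g := fun s => (b - a) * A.indicator ρ s)
          (by exact (hint b).sub (hint a)) hint3]
    rw [heq]
    have hptwise : ∀ s : ℝ,
        |max (b - ε * s) 0 * ρ s - max (a - ε * s) 0 * ρ s - (b - a) * A.indicator ρ s|
          ≤ 2 * |b - a| * (C (b - a)).indicator ρ s := by
      intro s
      have hbu : b - ε * s = (a - ε * s) + (b - a) := by ring
      rw [hbu]
      have hcore := core_bound (a - ε * s) (b - a)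
      have hA_mem : s ∈ A ↔ 0 ≤ a - ε * s := by
        simp only [hA_def, Set.mem_setOf_eq]; constructor <;> intro <;> linarith
      have hC_mem : s ∈ C (b - a) ↔ |a - ε * s| ≤ |b - a| := Iff.rfl
      by_cases h1 : 0 ≤ a - ε * s <;> by_cases h2 : |a - ε * s| ≤ |b - a|
      · rw [Set.indicator_of_mem (hA_mem.2 h1), Set.indicator_of_mem (hC_mem.2 h2)]
        rw [if_pos h1, if_pos h2] at hcore
        have e1 : max ((a - ε * s) + (b - a)) 0 * ρ s - max (a - ε * s) 0 * ρ s
            - (b - a) * ρ s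
            = (max ((a - ε * s) + (b - a)) 0 - max (a - ε * s) 0 - (b - a)) * ρ s := by
          ring
        rw [e1, abs_mul, abs_of_nonneg (hρ_nonneg s)]
        exact mul_le_mul_of_nonneg_right hcore (hρ_nonneg s)
      · rw [Set.indicator_of_mem (hA_mem.2 h1),
          Set.indicator_of_notMem (fun hc => h2 (hC_mem.1 hc))]
        rw [if_pos h1, if_neg h2] at hcore
        have e1 : max ((a - ε * s) + (b - a)) 0 * ρ s - max (a - ε * s) 0 * ρ s
            - (b - a) * ρ s
            = (max ((a - ε * s) + (b - a)) 0 - max (a - ε * s) 0 - (b - a)) * ρ s := by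
          ring
        rw [e1, abs_mul, abs_of_nonneg (hρ_nonneg s)]
        have := mul_le_mul_of_nonneg_right hcore (hρ_nonneg s)
        simpa using this
      · rw [Set.indicator_of_notMem (fun hc => h1 (hA_mem.1 hc)),
          Set.indicator_of_mem (hC_mem.2 h2)]
        rw [if_neg h1, if_pos h2] at hcore
        have e1 : max ((a - ε * s) + (b - a)) 0 * ρ s - max (a - ε * s) 0 * ρ s
            - (b - a) * 0
            = (max ((a - ε * s) + (b - a)) 0 - max (a - ε * s) 0 - 0) * ρ s := by
          ring
        rw [e1, abs_mul, abs_of_nonneg (hρ_nonneg s)]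
        exact mul_le_mul_of_nonneg_right hcore (hρ_nonneg s)
      · rw [Set.indicator_of_notMem (fun hc => h1 (hA_mem.1 hc)),
          Set.indicator_of_notMem (fun hc => h2 (hC_mem.1 hc))]
        rw [if_neg h1, if_neg h2] at hcore
        have e1 : max ((a - ε * s) + (b - a)) 0 * ρ s - max (a - ε * s) 0 * ρ s
            - (b - a) * 0
            = (max ((a - ε * s) + (b - a)) 0 - max (a - ε * s) 0 - 0) * ρ s := by
          ring
        rw [e1, abs_mul, abs_of_nonneg (hρ_nonneg s)]
        have := mul_le_mul_of_nonneg_right hcore (hρ_nonneg s)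
        simpa using this
    have hGint : Integrable (fun s => max (b - ε * s) 0 * ρ s
        - max (a - ε * s) 0 * ρ s - (b - a) * A.indicator ρ s) :=
      ((hint b).sub (hint a)).sub hint3
    calc |∫ s, (max (b - ε * s) 0 * ρ s - max (a - ε * s) 0 * ρ s
            - (b - a) * A.indicator ρ s)|
        ≤ ∫ s, |max (b - ε * s) 0 * ρ s - max (a - ε * s) 0 * ρ s
            - (b - a) * A.indicator ρ s| := by
          simpa [Real.norm_eq_abs] using norm_integral_le_integral_norm
            (fun s => max (b - ε * s) 0 * ρ s - max (a - ε * s) 0 * ρ s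
              - (b - a) * A.indicator ρ s)
      _ ≤ ∫ s, 2 * |b - a| * (C (b - a)).indicator ρ s :=
          integral_mono hGint.abs ((hKint (b - a)).const_mul _) hptwise
      _ = 2 * |b - a| * K (b - a) := integral_const_mul _ _
  -- conclude
  rw [hasDerivAt_iff_tendsto]
  apply squeeze_zero (g := fun b => 2 * K (b - a))
  · intro b; positivity
  · intro b
    by_cases hb : b = a
    · subst hb
      simp only [sub_self, norm_zero, inv_zero, zero_smul, sub_zero, zero_mul]
      exact mul_nonneg (by norm_num) (hKnonneg 0)
    · have hba : (0:ℝ) < |b - a| := abs_pos.2 (sub_ne_zero.2 hb)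
      have hk := keybound b
      rw [Real.norm_eq_abs, Real.norm_eq_abs, smul_eq_mul]
      calc |b - a|⁻¹ * |(∫ s, max (b - ε * s) 0 * ρ s)
              - (∫ s, max (a - ε * s) 0 * ρ s) - (b - a) * F|
          ≤ |b - a|⁻¹ * (2 * |b - a| * K (b - a)) := by
            exact mul_le_mul_of_nonneg_left hk (inv_nonneg.2 hba.le)
        _ = 2 * K (b - a) := by field_simp
  · have ht : Tendsto (fun b : ℝ => b - a) (𝓝 a) (𝓝 0) := by
      have : Tendsto (fun b : ℝ => b - a) (𝓝 a) (𝓝 (a - a)) :=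
        tendsto_id.sub tendsto_const_nhds
      simpa using this
    simpa using (hK0.comp ht).const_mul (2:ℝ)

/-- For a probability density `ρ` with finite first absolute moment,
continuously differentiable functions `g 0, …, g (m-1)`, and fixed `ε > 0`, the nested
smoothing `S 0` (built from the smoothed plus function) is differentiable, and at every
`x` its derivative is a convex combination `∑ Λ i * (g i)'(x)` with `Λ i ∈ [0,1]`,
`∑ Λ i = 1`. -/
theorem nested_smoothing_differentiable
    (ρ : ℝ → ℝ) (hρ_int : Integrable ρ)
    (hρ_nonneg : ∀ t, 0 ≤ ρ t)
    (hρ_one : ∫ t, ρ t = 1)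
    (κ : ℝ) (hκ_int : Integrable (fun t => |t| * ρ t))
    (hκ : κ = ∫ t, |t| * ρ t)
    (m : ℕ) (hm : 1 ≤ m)
    (g : ℕ → ℝ → ℝ) (hg_smooth : ∀ i < m, ContDiff ℝ 1 (g i))
    (ε : ℝ) (hε : 0 < ε)
    (S : ℕ → ℝ → ℝ)
    (hS_last : ∀ x, S (m - 1) x = g (m - 1) x)
    (hS_rec : ∀ j < m - 1, ∀ x,
      S j x = g j x + ∫ s, max (S (j + 1) x - g j x - ε * s) 0 * ρ s) :
    Differentiable ℝ (S 0) ∧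
      ∀ x : ℝ, ∃ Λ : ℕ → ℝ,
        (∀ i < m, Λ i ∈ Set.Icc (0 : ℝ) 1) ∧
        (∑ i ∈ Finset.range m, Λ i) = 1 ∧
        deriv (S 0) x = ∑ i ∈ Finset.range m, Λ i * deriv (g i) x := by
  have hgd : ∀ i < m, Differentiable ℝ (g i) := fun i hi =>
    (hg_smooth i hi).differentiable one_ne_zero
  have key : ∀ k j : ℕ, j + k = m - 1 →
      Differentiable ℝ (S j) ∧ ∀ x : ℝ, ∃ Λ : ℕ → ℝ,
        (∀ i ∈ Finset.Ico j m, Λ i ∈ Set.Icc (0:ℝ) 1) ∧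
        (∑ i ∈ Finset.Ico j m, Λ i) = 1 ∧
        deriv (S j) x = ∑ i ∈ Finset.Ico j m, Λ i * deriv (g i) x := by
    intro k
    induction k with
    | zero =>
      intro j hj
      have hjm : j = m - 1 := by omega
      subst hjm
      have hlt : m - 1 < m := by omega
      have hSe : S (m-1) = g (m-1) := funext hS_last
      rw [hSe]
      have hIco : Finset.Ico (m-1) m = {m-1} := by
        ext t
        simp only [Finset.mem_Ico, Finset.mem_singleton]
        omega
      refine ⟨hgd _ hlt, fun x => ⟨fun i => if i = m - 1 then 1 else 0, ?_, ?_, ?_⟩⟩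
      · intro i hi
        rw [hIco, Finset.mem_singleton] at hi
        subst hi
        simp
      · rw [hIco]; simp
      · rw [hIco]; simp
    | succ k ih =>
      intro j hj
      have hjm : j < m - 1 := by omega
      obtain ⟨hdiff, hΛ⟩ := ih (j+1) (by omega)
      have hglt : j < m := by omega
      have hSj' : S j = fun x => g j x +
          (fun a => ∫ s, max (a - ε * s) 0 * ρ s) (S (j+1) x - g j x) := by
        funext x
        exact hS_rec j hjm x
      set q : ℝ → ℝ := fun x =>
        ∫ s, ({s : ℝ | ε * s ≤ S (j+1) x - g j x}).indicator ρ s with hq_def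
      have hq0 : ∀ x, 0 ≤ q x := fun x =>
        integral_nonneg fun s => Set.indicator_nonneg (fun t _ => hρ_nonneg t) s
      have hq1 : ∀ x, q x ≤ 1 := by
        intro x
        rw [hq_def, ← hρ_one]
        have hAx : MeasurableSet {s : ℝ | ε * s ≤ S (j+1) x - g j x} :=
          measurableSet_le (measurable_id.const_mul ε) measurable_const
        exact integral_mono (hρ_int.indicator hAx) hρ_int
          (fun s => Set.indicator_le_self' (fun t _ => hρ_nonneg t) s)
      have hder : ∀ x, HasDerivAt (S j)
          (deriv (g j) x + q x * (deriv (S (j+1)) x - deriv (g j) x)) x := by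
        intro x
        rw [hSj']
        have h2 : HasDerivAt (fun y => S (j+1) y - g j y)
            (deriv (S (j+1)) x - deriv (g j) x) x :=
          ((hdiff x).hasDerivAt).sub ((hgd j hglt x).hasDerivAt)
        have h3 := phat_hasDerivAt ρ ε hρ_int hρ_nonneg hκ_int hε (S (j+1) x - g j x)
        have h4 : HasDerivAt
            (fun y => (fun a => ∫ s, max (a - ε * s) 0 * ρ s) (S (j+1) y - g j y))
            (q x * (deriv (S (j+1)) x - deriv (g j) x)) x := by have := h3.comp x h2; exact this
        exact ((hgd j hglt x).hasDerivAt).add h4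
      refine ⟨fun x => (hder x).differentiableAt, fun x => ?_⟩
      obtain ⟨Λ', hΛ'1, hΛ'2, hΛ'3⟩ := hΛ x
      refine ⟨fun i => if i = j then 1 - q x else q x * Λ' i, ?_, ?_, ?_⟩
      · intro i hi
        rw [Finset.mem_Ico] at hi
        show (if i = j then 1 - q x else q x * Λ' i) ∈ Set.Icc (0:ℝ) 1
        by_cases hij : i = j
        · subst hij
          rw [if_pos rfl]
          exact Set.mem_Icc.2 ⟨by linarith [hq1 x], by linarith [hq0 x]⟩
        · rw [if_neg hij]
          have hmem : i ∈ Finset.Ico (j+1) m := Finset.mem_Ico.2 ⟨by omega, hi.2⟩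
          obtain ⟨hl, hr⟩ := hΛ'1 i hmem
          exact Set.mem_Icc.2 ⟨mul_nonneg (hq0 x) hl, mul_le_one₀ (hq1 x) hl hr⟩
      · beta_reduce
        rw [Finset.sum_eq_sum_Ico_succ_bot hglt, if_pos rfl]
        have he : ∑ i ∈ Finset.Ico (j+1) m, (if i = j then 1 - q x else q x * Λ' i)
            = ∑ i ∈ Finset.Ico (j+1) m, q x * Λ' i :=
          Finset.sum_congr rfl fun i hi =>
            if_neg (by rw [Finset.mem_Ico] at hi; omega)
        rw [he, ← Finset.mul_sum, hΛ'2]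
        ring
      · rw [(hder x).deriv, hΛ'3]
        beta_reduce
        rw [Finset.sum_eq_sum_Ico_succ_bot hglt, if_pos rfl]
        have he : ∑ i ∈ Finset.Ico (j+1) m,
              (if i = j then 1 - q x else q x * Λ' i) * deriv (g i) x
            = ∑ i ∈ Finset.Ico (j+1) m, q x * (Λ' i * deriv (g i) x) :=
          Finset.sum_congr rfl fun i hi => by
            rw [if_neg (by rw [Finset.mem_Ico] at hi; omega)]; ring
        rw [he, ← Finset.mul_sum]
        ring
  obtain ⟨hd, hl⟩ := key (m-1) 0 (by omega)
  refine ⟨hd, fun x => ?_⟩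
  obtain ⟨Λ, h1, h2, h3⟩ := hl x
  exact ⟨Λ, fun i hi => h1 i (by rw [Finset.mem_Ico]; omega),
    by rw [Finset.range_eq_Ico]; exact h2,
    by rw [Finset.range_eq_Ico]; exact h3⟩
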